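/- Let C ⊆ ℝⁿ be compact convex containing 0 in its interior, with polar C°. Fix a unit vector s and suppose the problem max_{y ∈ C} ⟨s, y⟩ has two distinct maximizers x₀ ≠ x₁. Then the function ξ ↦ τ(s + ξ(x₁ − x₀)), where τ(w) = max{τ > 0 : τw ∈ C°}, has distinct one-sided derivatives at ξ = 0; in particular τ is not Gâteaux differentiable at s. -/

import Mathlib

open scoped RealInnerProductSpace
open Metric

section aux

variable {n : ℕ}

/-- The support function of a set. -/
noncomputable def supf (C : Set (EuclideanSpace ℝ (Fin n))) (w : EuclideanSpace ℝ (Fin n)) : ℝ :=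
  sSup ((fun y => ⟪w, y⟫) '' C)

lemma supf_attained {C : Set (EuclideanSpace ℝ (Fin n))} (hcomp : IsCompact C)
    (hne : C.Nonempty) (w : EuclideanSpace ℝ (Fin n)) :
    ∃ z ∈ C, supf C w = ⟪w, z⟫ ∧ ∀ y ∈ C, ⟪w, y⟫ ≤ ⟪w, z⟫ := by
  have hcont : Continuous fun y : EuclideanSpace ℝ (Fin n) => ⟪w, y⟫ :=
    continuous_const.inner continuous_id
  obtain ⟨z, hz, hmax⟩ := hcomp.exists_isMaxOn hne hcont.continuousOn
  have hub : ∀ y ∈ C, ⟪w, y⟫ ≤ ⟪w, z⟫ := fun y hy => (isMaxOn_iff.mp hmax) y hy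
  refine ⟨z, hz, ?_, hub⟩
  exact IsGreatest.csSup_eq ⟨⟨z, hz, rfl⟩, by rintro _ ⟨y, hy, rfl⟩; exact hub y hy⟩

end aux

/-- If the linear functional `⟪s, ·⟫` has two distinct maximizers `x₀ ≠ x₁` over a compact
convex set `C` with `0` in its interior, then the restriction of the gauge-type function
`τ(w) = max{τ > 0 : τ • w ∈ C°}` of the polar `C°` to the line `ξ ↦ s + ξ • (x₁ - x₀)`
has distinct one-sided derivatives at `ξ = 0`; in particular it is not differentiable there. -/
theorem stmt_3 (n : ℕ) (C : Set (EuclideanSpace ℝ (Fin n)))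
    (hcomp : IsCompact C) (hconv : Convex ℝ C)
    (h0 : (0 : EuclideanSpace ℝ (Fin n)) ∈ interior C)
    (s x₀ x₁ : EuclideanSpace ℝ (Fin n)) (hs : ‖s‖ = 1)
    (hx₀ : x₀ ∈ C) (hx₁ : x₁ ∈ C) (hne : x₀ ≠ x₁)
    (hmax₀ : ∀ y ∈ C, ⟪s, y⟫ ≤ ⟪s, x₀⟫)
    (hmax₁ : ∀ y ∈ C, ⟪s, y⟫ ≤ ⟪s, x₁⟫) :
    let τ : EuclideanSpace ℝ (Fin n) → ℝ :=
      fun w => sSup {t : ℝ | 0 < t ∧ t • w ∈ {u : EuclideanSpace ℝ (Fin n) | ∀ y ∈ C, ⟪u, y⟫ ≤ 1}}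
    let g : ℝ → ℝ := fun ξ => τ (s + ξ • (x₁ - x₀))
    (∃ a b : ℝ, HasDerivWithinAt g a (Set.Ici 0) 0 ∧ HasDerivWithinAt g b (Set.Iic 0) 0 ∧
      a < b) ∧ ¬ DifferentiableAt ℝ g 0 := by
  intro τ g
  have htau_def : ∀ w : EuclideanSpace ℝ (Fin n),
      τ w = sSup {t : ℝ | 0 < t ∧ t • w ∈
        {u : EuclideanSpace ℝ (Fin n) | ∀ y ∈ C, ⟪u, y⟫ ≤ 1}} := fun _ => rfl
  set v : EuclideanSpace ℝ (Fin n) := x₁ - x₀ with hv_def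
  have hg_def : g = fun ξ => τ (s + ξ • v) := rfl
  have hv : v ≠ 0 := sub_ne_zero.2 (Ne.symm hne)
  have hCne : C.Nonempty := ⟨0, interior_subset h0⟩
  -- a small ball inside C
  obtain ⟨ε, hε, hball⟩ : ∃ ε > 0, ball (0 : EuclideanSpace ℝ (Fin n)) ε ⊆ C := by
    rcases Metric.isOpen_iff.mp isOpen_interior 0 h0 with ⟨ε, hε, hb⟩
    exact ⟨ε, hε, hb.trans interior_subset⟩
  -- positivity of the support function
  have Hpos : ∀ w : EuclideanSpace ℝ (Fin n), w ≠ 0 → 0 < supf C w := by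
    intro w hw
    obtain ⟨z, hz, he, hub⟩ := supf_attained hcomp hCne w
    have hwn : (0 : ℝ) < ‖w‖ := norm_pos_iff.mpr hw
    have hyC : ((ε / 2) / ‖w‖) • w ∈ C := by
      apply hball
      simp only [mem_ball, dist_zero_right, norm_smul, Real.norm_eq_abs]
      rw [abs_of_pos (by positivity)]
      rw [div_mul_cancel₀ _ hwn.ne']
      linarith
    have hip : ⟪w, ((ε / 2) / ‖w‖) • w⟫ = (ε / 2) * ‖w‖ := by
      rw [real_inner_smul_right, real_inner_self_eq_norm_sq]
      field_simp
    have h1 : (0:ℝ) < ⟪w, ((ε / 2) / ‖w‖) • w⟫ := by rw [hip]; positivity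
    calc (0:ℝ) < ⟪w, ((ε / 2) / ‖w‖) • w⟫ := h1
      _ ≤ ⟪w, z⟫ := hub _ hyC
      _ = supf C w := he.symm
  -- τ = (supf C)⁻¹
  have htau : ∀ w : EuclideanSpace ℝ (Fin n), τ w = (supf C w)⁻¹ := by
    intro w
    rw [htau_def]
    by_cases hw : w = 0
    · subst hw
      have h1 : {t : ℝ | 0 < t ∧ t • (0 : EuclideanSpace ℝ (Fin n)) ∈
          {u : EuclideanSpace ℝ (Fin n) | ∀ y ∈ C, ⟪u, y⟫ ≤ 1}} = Set.Ioi 0 := by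
        ext t
        simp [smul_zero, inner_zero_left, zero_le_one]
      have h2 : supf C (0 : EuclideanSpace ℝ (Fin n)) = 0 := by
        have himg : (fun y => ⟪(0 : EuclideanSpace ℝ (Fin n)), y⟫) '' C = {0} := by
          rw [show (fun y => ⟪(0 : EuclideanSpace ℝ (Fin n)), y⟫) = fun _ => (0:ℝ)
            by funext y; exact inner_zero_left y]
          exact Set.Nonempty.image_const hCne 0
        rw [supf, himg, csSup_singleton]
      rw [h1, h2, Real.sSup_of_not_bddAbove (not_bddAbove_Ioi (0:ℝ)), inv_zero]
    · have hp := Hpos w hw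
      obtain ⟨z, hz, he, hub⟩ := supf_attained hcomp hCne w
      have hset : {t : ℝ | 0 < t ∧ t • w ∈
          {u : EuclideanSpace ℝ (Fin n) | ∀ y ∈ C, ⟪u, y⟫ ≤ 1}} =
          Set.Ioc 0 (supf C w)⁻¹ := by
        ext t
        simp only [Set.mem_setOf_eq, Set.mem_Ioc]
        constructor
        · rintro ⟨ht, hmem⟩
          refine ⟨ht, ?_⟩
          have h1 : ⟪t • w, z⟫ ≤ 1 := hmem z hz
          rw [real_inner_smul_left] at h1
          rw [inv_eq_one_div, le_div_iff₀ hp, he]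
          exact h1
        · rintro ⟨ht, hle⟩
          refine ⟨ht, fun y hy => ?_⟩
          rw [real_inner_smul_left]
          calc t * ⟪w, y⟫ ≤ t * supf C w := by
                apply mul_le_mul_of_nonneg_left _ ht.le
                rw [he]; exact hub y hy
            _ ≤ (supf C w)⁻¹ * supf C w := by
                apply mul_le_mul_of_nonneg_right _ hp.le
                exact hle
            _ = 1 := inv_mul_cancel₀ hp.ne'
      rw [hset, csSup_Ioc (by positivity)]
  -- the function h along the line
  set h : ℝ → ℝ := fun ξ => supf C (s + ξ • v) with hh_def
  have hg : g = fun ξ => (h ξ)⁻¹ := funext fun ξ => htau _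
  have hline : ∀ (ξ : ℝ) (y : EuclideanSpace ℝ (Fin n)),
      ⟪s + ξ • v, y⟫ = ⟪s, y⟫ + ξ * ⟪v, y⟫ := by
    intro ξ y
    rw [inner_add_left, real_inner_smul_left]
  have hub' : ∀ (ξ : ℝ), ∀ y ∈ C, ⟪s, y⟫ + ξ * ⟪v, y⟫ ≤ h ξ := by
    intro ξ y hy
    obtain ⟨z, hz, he, hub⟩ := supf_attained hcomp hCne (s + ξ • v)
    calc ⟪s, y⟫ + ξ * ⟪v, y⟫ = ⟪s + ξ • v, y⟫ := (hline ξ y).symm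
      _ ≤ ⟪s + ξ • v, z⟫ := hub y hy
      _ = supf C (s + ξ • v) := he.symm
  -- value at 0
  have hs0 : s ≠ 0 := by intro hc; rw [hc, norm_zero] at hs; norm_num at hs
  have hh0 : h 0 = supf C s := by simp [hh_def]
  have h0eq₀ : h 0 = ⟪s, x₀⟫ := by
    obtain ⟨z, hz, he, hub⟩ := supf_attained hcomp hCne s
    rw [hh0, he]
    exact le_antisymm (hmax₀ z hz) (hub x₀ hx₀)
  have h0eq₁ : h 0 = ⟪s, x₁⟫ := by
    obtain ⟨z, hz, he, hub⟩ := supf_attained hcomp hCne s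
    rw [hh0, he]
    exact le_antisymm (hmax₁ z hz) (hub x₁ hx₁)
  have hM : 0 < h 0 := by rw [hh0]; exact Hpos s hs0
  -- convexity of h
  have hconvh : ConvexOn ℝ Set.univ h := by
    refine ⟨convex_univ, ?_⟩
    intro ξ₁ _ ξ₂ _ a b ha hb hab
    simp only [smul_eq_mul]
    obtain ⟨z, hz, he, hub⟩ := supf_attained hcomp hCne (s + (a * ξ₁ + b * ξ₂) • v)
    have e1 : h (a * ξ₁ + b * ξ₂) = ⟪s, z⟫ + (a * ξ₁ + b * ξ₂) * ⟪v, z⟫ := by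
      simp only [hh_def]
      rw [he, hline]
    have e2 : ⟪s, z⟫ + (a * ξ₁ + b * ξ₂) * ⟪v, z⟫ =
        a * (⟪s, z⟫ + ξ₁ * ⟪v, z⟫) + b * (⟪s, z⟫ + ξ₂ * ⟪v, z⟫) := by
      linear_combination (⟪s, z⟫ : ℝ) * hab.symm
    have l1 : ⟪s, z⟫ + ξ₁ * ⟪v, z⟫ ≤ h ξ₁ := hub' ξ₁ z hz
    have l2 : ⟪s, z⟫ + ξ₂ * ⟪v, z⟫ ≤ h ξ₂ := hub' ξ₂ z hz
    have m1 := mul_le_mul_of_nonneg_left l1 ha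
    have m2 := mul_le_mul_of_nonneg_left l2 hb
    rw [e1, e2]
    linarith
  -- slope bounds
  have lowB : ∀ ξ : ℝ, 0 < ξ → ⟪v, x₁⟫ ≤ slope h 0 ξ := by
    intro ξ hξ
    rw [slope_def_field, sub_zero, le_div_iff₀ hξ]
    have := hub' ξ x₁ hx₁
    rw [← h0eq₁] at this
    linarith
  have upB : ∀ ξ : ℝ, ξ < 0 → slope h 0 ξ ≤ ⟪v, x₀⟫ := by
    intro ξ hξ
    rw [slope_def_field, sub_zero, div_le_iff_of_neg hξ]
    have := hub' ξ x₀ hx₀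
    rw [← h0eq₀] at this
    linarith
  -- monotone slopes
  have monoIoi : MonotoneOn (slope h 0) (Set.Ioi 0) := by
    intro x hx y hy hxy
    rw [slope_def_field, slope_def_field]
    exact hconvh.secant_mono (Set.mem_univ 0) (Set.mem_univ x) (Set.mem_univ y)
      (ne_of_gt hx) (ne_of_gt hy) hxy
  have monoIio : MonotoneOn (slope h 0) (Set.Iio 0) := by
    intro x hx y hy hxy
    rw [slope_def_field, slope_def_field]
    exact hconvh.secant_mono (Set.mem_univ 0) (Set.mem_univ x) (Set.mem_univ y)
      (ne_of_lt hx) (ne_of_lt hy) hxy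
  have bddB : BddBelow (slope h 0 '' Set.Ioi 0) := by
    refine ⟨⟪v, x₁⟫, ?_⟩
    rintro _ ⟨ξ, hξ, rfl⟩
    exact lowB ξ hξ
  have bddA : BddAbove (slope h 0 '' Set.Iio 0) := by
    refine ⟨⟪v, x₀⟫, ?_⟩
    rintro _ ⟨ξ, hξ, rfl⟩
    exact upB ξ hξ
  set p : ℝ := sInf (slope h 0 '' Set.Ioi 0) with hp_def
  set q : ℝ := sSup (slope h 0 '' Set.Iio 0) with hq_def
  have neIoi : (slope h 0 '' Set.Ioi 0).Nonempty := ⟨_, ⟨1, Set.mem_Ioi.2 one_pos, rfl⟩⟩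
  have neIio : (slope h 0 '' Set.Iio 0).Nonempty :=
    ⟨_, ⟨-1, Set.mem_Iio.2 (by norm_num), rfl⟩⟩
  have hp_ge : ⟪v, x₁⟫ ≤ p := by
    apply le_csInf neIoi
    rintro _ ⟨ξ, hξ, rfl⟩
    exact lowB ξ hξ
  have hq_le : q ≤ ⟪v, x₀⟫ := by
    apply csSup_le neIio
    rintro _ ⟨ξ, hξ, rfl⟩
    exact upB ξ hξ
  have hx01 : ⟪v, x₀⟫ < ⟪v, x₁⟫ := by
    rw [← sub_pos, ← inner_sub_right]
    rw [show x₁ - x₀ = v from rfl, real_inner_self_eq_norm_sq]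
    have : 0 < ‖v‖ := norm_pos_iff.mpr hv
    positivity
  have hqp : q < p := lt_of_le_of_lt hq_le (lt_of_lt_of_le hx01 hp_ge)
  -- one-sided derivatives of h
  have hdh_r : HasDerivWithinAt h p (Set.Ici 0) 0 := by
    rw [hasDerivWithinAt_iff_tendsto_slope, Set.Ici_sdiff_left]
    exact MonotoneOn.tendsto_nhdsGT monoIoi bddB
  have hdh_l : HasDerivWithinAt h q (Set.Iic 0) 0 := by
    rw [hasDerivWithinAt_iff_tendsto_slope, Set.Iic_diff_right]
    exact MonotoneOn.tendsto_nhdsLT monoIio bddA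
  -- one-sided derivatives of g
  have ga : HasDerivWithinAt g (-p / h 0 ^ 2) (Set.Ici 0) 0 := by
    rw [hg]; exact hdh_r.inv hM.ne'
  have gb : HasDerivWithinAt g (-q / h 0 ^ 2) (Set.Iic 0) 0 := by
    rw [hg]; exact hdh_l.inv hM.ne'
  have hab : -p / h 0 ^ 2 < -q / h 0 ^ 2 :=
    (div_lt_div_iff_of_pos_right (by positivity)).2 (by linarith)
  constructor
  · exact ⟨_, _, ga, gb, hab⟩
  · intro hdiff
    have hda := hdiff.hasDerivAt
    have e1 : derivWithin g (Set.Ici 0) 0 = -p / h 0 ^ 2 :=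
      ga.derivWithin (uniqueDiffOn_Ici 0 0 Set.self_mem_Ici)
    have e1' : derivWithin g (Set.Ici 0) 0 = deriv g 0 :=
      (hda.hasDerivWithinAt).derivWithin (uniqueDiffOn_Ici 0 0 Set.self_mem_Ici)
    have e2 : derivWithin g (Set.Iic 0) 0 = -q / h 0 ^ 2 :=
      gb.derivWithin (uniqueDiffOn_Iic 0 0 Set.self_mem_Iic)
    have e2' : derivWithin g (Set.Iic 0) 0 = deriv g 0 :=
      (hda.hasDerivWithinAt).derivWithin (uniqueDiffOn_Iic 0 0 Set.self_mem_Iic)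
    rw [e1'] at e1
    rw [e2'] at e2
    rw [e1] at e2
    linarith
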